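/- Let D ≥ 1, ℏ > 0, and α ∈ ℝ^D × ℝ^D. Then (2πℏ)^{−D} ∫_{ℝ^D × ℝ^D} |⟨φ_α, φ_β⟩_{L²(ℝ^D)}| dβ = 2^D. -/

import Mathlib

open MeasureTheory Complex Real


/-- The normalized coherent state
`φ_α(x) = (πℏ)^{-D/4} exp(i α_p ⋅ (x − α_x/2)/ℏ) exp(−|x − α_x|²/(2ℏ))`. -/
noncomputable def coherent (D : ℕ) (ℏ : ℝ)
    (α : EuclideanSpace ℝ (Fin D) × EuclideanSpace ℝ (Fin D))
    (x : EuclideanSpace ℝ (Fin D)) : ℂ :=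
  (((Real.pi * ℏ) ^ (-(D : ℝ) / 4) : ℝ) : ℂ) *
    Complex.exp (Complex.I * (((inner ℝ α.2 (x - (2:ℝ)⁻¹ • α.1) : ℝ) / ℏ : ℝ) : ℂ)) *
    Complex.exp (-((‖x - α.1‖ ^ 2 / (2 * ℏ) : ℝ) : ℂ))

lemma coherent_mul_eq (D : ℕ) (ℏ : ℝ) (hℏ : 0 < ℏ)
    (α β : EuclideanSpace ℝ (Fin D) × EuclideanSpace ℝ (Fin D))
    (v : EuclideanSpace ℝ (Fin D)) :
    (starRingEnd ℂ) (coherent D ℏ α (v + (2:ℝ)⁻¹ • (α.1 + β.1))) *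
      coherent D ℏ β (v + (2:ℝ)⁻¹ • (α.1 + β.1)) =
    (((Real.pi * ℏ) ^ (-(D : ℝ) / 2) * Real.exp (-(‖β.1 - α.1‖^2 / (4 * ℏ))) : ℝ) : ℂ) *
      Complex.exp (Complex.I * (((inner ℝ β.2 α.1 - inner ℝ α.2 β.1 : ℝ) / (2 * ℏ) : ℝ) : ℂ)) *
      Complex.exp (-(ℏ⁻¹ : ℂ) * (‖v‖:ℂ)^2 +
        (Complex.I * (ℏ⁻¹ : ℝ)) * ((inner ℝ (β.2 - α.2) v : ℝ) : ℂ)) := by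
  have hA : (inner ℝ β.2 ((v + (2:ℝ)⁻¹ • (α.1 + β.1)) - (2:ℝ)⁻¹ • β.1) : ℝ)
      - (inner ℝ α.2 ((v + (2:ℝ)⁻¹ • (α.1 + β.1)) - (2:ℝ)⁻¹ • α.1) : ℝ)
      = (inner ℝ (β.2 - α.2) v : ℝ) + ((inner ℝ β.2 α.1 : ℝ) - (inner ℝ α.2 β.1 : ℝ)) / 2 := by
    have e1 : (v + (2:ℝ)⁻¹ • (α.1 + β.1)) - (2:ℝ)⁻¹ • β.1 = v + (2:ℝ)⁻¹ • α.1 := by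
      module
    have e2 : (v + (2:ℝ)⁻¹ • (α.1 + β.1)) - (2:ℝ)⁻¹ • α.1 = v + (2:ℝ)⁻¹ • β.1 := by
      module
    rw [e1, e2, inner_add_right, inner_add_right, inner_smul_right, inner_smul_right,
      inner_sub_left]
    ring
  have hB : ‖(v + (2:ℝ)⁻¹ • (α.1 + β.1)) - α.1‖^2 + ‖(v + (2:ℝ)⁻¹ • (α.1 + β.1)) - β.1‖^2
      = 2 * ‖v‖^2 + ‖β.1 - α.1‖^2 / 2 := by
    have e1 : (v + (2:ℝ)⁻¹ • (α.1 + β.1)) - α.1 = v + (2:ℝ)⁻¹ • (β.1 - α.1) := by module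
    have e2 : (v + (2:ℝ)⁻¹ • (α.1 + β.1)) - β.1 = v - (2:ℝ)⁻¹ • (β.1 - α.1) := by module
    rw [e1, e2, norm_add_sq_real, norm_sub_sq_real, norm_smul]
    simp [mul_pow]
    ring
  have hℏ' : (ℏ : ℂ) ≠ 0 := by exact_mod_cast hℏ.ne'
  have hA' : ((inner ℝ β.2 ((v + (2:ℝ)⁻¹ • (α.1 + β.1)) - (2:ℝ)⁻¹ • β.1) : ℝ) : ℂ)
      - ((inner ℝ α.2 ((v + (2:ℝ)⁻¹ • (α.1 + β.1)) - (2:ℝ)⁻¹ • α.1) : ℝ) : ℂ)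
      = ((inner ℝ (β.2 - α.2) v : ℝ) : ℂ)
        + (((inner ℝ β.2 α.1 : ℝ) : ℂ) - ((inner ℝ α.2 β.1 : ℝ) : ℂ)) / 2 := by
    exact_mod_cast congrArg (Complex.ofReal) hA
  have hB' : ((‖(v + (2:ℝ)⁻¹ • (α.1 + β.1)) - α.1‖ : ℝ) : ℂ)^2
      + ((‖(v + (2:ℝ)⁻¹ • (α.1 + β.1)) - β.1‖ : ℝ) : ℂ)^2
      = 2 * ((‖v‖ : ℝ) : ℂ)^2 + ((‖β.1 - α.1‖ : ℝ) : ℂ)^2 / 2 := by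
    exact_mod_cast congrArg (Complex.ofReal) hB
  simp only [coherent, map_mul, Complex.conj_ofReal, ← Complex.exp_conj, map_neg, map_mul,
    Complex.conj_I, Complex.conj_ofReal]
  set x := v + (2:ℝ)⁻¹ • (α.1 + β.1) with hx
  have csplit : ((Real.pi * ℏ) ^ (-(D : ℝ) / 2) : ℝ)
      = (Real.pi * ℏ) ^ (-(D : ℝ) / 4) * (Real.pi * ℏ) ^ (-(D : ℝ) / 4) := by
    rw [← Real.rpow_add (by positivity)]; congr 1; ring
  have key : (-Complex.I * (((inner ℝ α.2 (x - (2:ℝ)⁻¹ • α.1) : ℝ) / ℏ : ℝ) : ℂ))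
      + (-((‖x - α.1‖ ^ 2 / (2 * ℏ) : ℝ) : ℂ))
      + (Complex.I * (((inner ℝ β.2 (x - (2:ℝ)⁻¹ • β.1) : ℝ) / ℏ : ℝ) : ℂ))
      + (-((‖x - β.1‖ ^ 2 / (2 * ℏ) : ℝ) : ℂ))
      = ((-(‖β.1 - α.1‖^2 / (4 * ℏ)) : ℝ) : ℂ)
        + Complex.I * (((inner ℝ β.2 α.1 - inner ℝ α.2 β.1 : ℝ) / (2 * ℏ) : ℝ) : ℂ)
        + (-(ℏ⁻¹ : ℂ) * (‖v‖:ℂ)^2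
          + (Complex.I * (ℏ⁻¹ : ℝ)) * ((inner ℝ (β.2 - α.2) v : ℝ) : ℂ)) := by
    push_cast
    linear_combination (Complex.I / (ℏ:ℂ)) * hA' - (1/(2*(ℏ:ℂ))) * hB'
  calc (((Real.pi * ℏ) ^ (-(D : ℝ) / 4) : ℝ) : ℂ)
        * Complex.exp (-Complex.I * (((inner ℝ α.2 (x - (2:ℝ)⁻¹ • α.1) : ℝ) / ℏ : ℝ) : ℂ))
        * Complex.exp (-((‖x - α.1‖ ^ 2 / (2 * ℏ) : ℝ) : ℂ))
        * ((((Real.pi * ℏ) ^ (-(D : ℝ) / 4) : ℝ) : ℂ)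
          * Complex.exp (Complex.I * (((inner ℝ β.2 (x - (2:ℝ)⁻¹ • β.1) : ℝ) / ℏ : ℝ) : ℂ))
          * Complex.exp (-((‖x - β.1‖ ^ 2 / (2 * ℏ) : ℝ) : ℂ)))
      = ((((Real.pi * ℏ) ^ (-(D : ℝ) / 4) : ℝ) : ℂ) * (((Real.pi * ℏ) ^ (-(D : ℝ) / 4) : ℝ) : ℂ))
        * Complex.exp ((-Complex.I * (((inner ℝ α.2 (x - (2:ℝ)⁻¹ • α.1) : ℝ) / ℏ : ℝ) : ℂ))
          + (-((‖x - α.1‖ ^ 2 / (2 * ℏ) : ℝ) : ℂ))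
          + (Complex.I * (((inner ℝ β.2 (x - (2:ℝ)⁻¹ • β.1) : ℝ) / ℏ : ℝ) : ℂ))
          + (-((‖x - β.1‖ ^ 2 / (2 * ℏ) : ℝ) : ℂ))) := by
        rw [Complex.exp_add, Complex.exp_add, Complex.exp_add]; ring
    _ = ((((Real.pi * ℏ) ^ (-(D : ℝ) / 4) : ℝ) : ℂ) * (((Real.pi * ℏ) ^ (-(D : ℝ) / 4) : ℝ) : ℂ))
        * Complex.exp (((-(‖β.1 - α.1‖^2 / (4 * ℏ)) : ℝ) : ℂ)
          + Complex.I * (((inner ℝ β.2 α.1 - inner ℝ α.2 β.1 : ℝ) / (2 * ℏ) : ℝ) : ℂ)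
          + (-(ℏ⁻¹ : ℂ) * (‖v‖:ℂ)^2
            + (Complex.I * (ℏ⁻¹ : ℝ)) * ((inner ℝ (β.2 - α.2) v : ℝ) : ℂ))) := by rw [key]
    _ = (((Real.pi * ℏ) ^ (-(D : ℝ) / 2) * Real.exp (-(‖β.1 - α.1‖^2 / (4 * ℏ))) : ℝ) : ℂ)
        * Complex.exp (Complex.I * (((inner ℝ β.2 α.1 - inner ℝ α.2 β.1 : ℝ) / (2 * ℏ) : ℝ) : ℂ))
        * Complex.exp (-(ℏ⁻¹ : ℂ) * (‖v‖:ℂ)^2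
          + (Complex.I * (ℏ⁻¹ : ℝ)) * ((inner ℝ (β.2 - α.2) v : ℝ) : ℂ)) := by
        rw [Complex.exp_add, Complex.exp_add, Complex.ofReal_mul, csplit,
          Complex.ofReal_exp, Complex.ofReal_mul]
        ring
lemma abs_inner_integral (D : ℕ) (ℏ : ℝ) (hℏ : 0 < ℏ)
    (α β : EuclideanSpace ℝ (Fin D) × EuclideanSpace ℝ (Fin D)) :
    ‖∫ x : EuclideanSpace ℝ (Fin D),
        (starRingEnd ℂ) (coherent D ℏ α x) * coherent D ℏ β x‖
      = Real.exp (-(‖β.1 - α.1‖^2 / (4 * ℏ))) * Real.exp (-(‖β.2 - α.2‖^2 / (4 * ℏ))) := by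
  have hb : 0 < (((ℏ⁻¹ : ℝ) : ℂ)).re := by
    simp only [Complex.ofReal_re]
    positivity
  have hint := GaussianFourier.integral_cexp_neg_mul_sq_norm_add
    (V := EuclideanSpace ℝ (Fin D)) hb (Complex.I * ((ℏ⁻¹ : ℝ) : ℂ)) (β.2 - α.2)
  rw [← MeasureTheory.integral_add_right_eq_self
    (fun x => (starRingEnd ℂ) (coherent D ℏ α x) * coherent D ℏ β x) ((2:ℝ)⁻¹ • (α.1 + β.1))]
  calc ‖∫ v : EuclideanSpace ℝ (Fin D),
        (starRingEnd ℂ) (coherent D ℏ α (v + (2:ℝ)⁻¹ • (α.1 + β.1))) *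
          coherent D ℏ β (v + (2:ℝ)⁻¹ • (α.1 + β.1))‖
      = ‖∫ v : EuclideanSpace ℝ (Fin D),
          ((((Real.pi * ℏ) ^ (-(D : ℝ) / 2) * Real.exp (-(‖β.1 - α.1‖^2 / (4 * ℏ))) : ℝ) : ℂ) *
            Complex.exp (Complex.I * (((inner ℝ β.2 α.1 - inner ℝ α.2 β.1 : ℝ) / (2 * ℏ) : ℝ) : ℂ))) *
          Complex.exp (-(ℏ⁻¹ : ℂ) * (‖v‖:ℂ)^2 +
            (Complex.I * (ℏ⁻¹ : ℝ)) * ((inner ℝ (β.2 - α.2) v : ℝ) : ℂ))‖ := by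
        congr 1
        apply MeasureTheory.integral_congr_ae
        filter_upwards with v
        rw [coherent_mul_eq D ℏ hℏ α β v]
    _ = ‖(((((Real.pi * ℏ) ^ (-(D : ℝ) / 2)
            * Real.exp (-(‖β.1 - α.1‖^2 / (4 * ℏ))) : ℝ) : ℂ) *
            Complex.exp (Complex.I * (((inner ℝ β.2 α.1 - inner ℝ α.2 β.1 : ℝ) / (2 * ℏ) : ℝ) : ℂ))) *
          ∫ v : EuclideanSpace ℝ (Fin D),
            Complex.exp (-(ℏ⁻¹ : ℂ) * (‖v‖:ℂ)^2 +
              (Complex.I * (ℏ⁻¹ : ℝ)) * ((inner ℝ (β.2 - α.2) v : ℝ) : ℂ)))‖ := by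
        rw [MeasureTheory.integral_const_mul]
    _ = Real.exp (-(‖β.1 - α.1‖^2 / (4 * ℏ))) * Real.exp (-(‖β.2 - α.2‖^2 / (4 * ℏ))) := by
        push_cast at hint
        simp only [Complex.ofReal_inv]
        rw [hint, finrank_euclideanSpace_fin]
        have hℏ' : (ℏ : ℂ) ≠ 0 := by exact_mod_cast hℏ.ne'
        have h1 : ((Real.pi : ℂ) / ((ℏ : ℂ))⁻¹) = ((Real.pi * ℏ : ℝ) : ℂ) := by
          push_cast
          field_simp
        have h2 : (Complex.I * ((ℏ : ℂ))⁻¹) ^ 2 * ((‖β.2 - α.2‖ : ℝ) : ℂ)^2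
            / (4 * ((ℏ : ℂ))⁻¹) = ((-(‖β.2 - α.2‖^2 / (4 * ℏ)) : ℝ) : ℂ) := by
          push_cast
          rw [mul_pow, Complex.I_sq]
          field_simp
        rw [h1, h2, norm_mul, norm_mul, norm_mul, Complex.norm_real, Real.norm_eq_abs,
          Complex.norm_exp, Complex.norm_exp]
        have h3 : ‖((Real.pi * ℏ : ℝ) : ℂ) ^ ((D : ℂ) / 2)‖
            = (Real.pi * ℏ) ^ ((D : ℝ) / 2) := by
          rw [Complex.norm_cpow_eq_rpow_re_of_pos (by positivity)]
          norm_num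
        rw [h3]
        have h4 : (Complex.I * (((inner ℝ β.2 α.1 - inner ℝ α.2 β.1 : ℝ) / (2 * ℏ) : ℝ) : ℂ)).re
            = 0 := by
          simp only [Complex.mul_re, Complex.I_re, Complex.I_im, Complex.ofReal_im,
            Complex.ofReal_re]
          ring
        have h5 : (((-(‖β.2 - α.2‖^2 / (4 * ℏ)) : ℝ)) : ℂ).re
            = -(‖β.2 - α.2‖^2 / (4 * ℏ)) := Complex.ofReal_re _
        rw [h4, h5, Real.exp_zero, abs_of_pos (by positivity)]
        have h6 : (Real.pi * ℏ) ^ (-(D : ℝ) / 2) * (Real.pi * ℏ) ^ ((D : ℝ) / 2) = 1 := by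
          rw [← Real.rpow_add (by positivity),
            show -(D:ℝ)/2 + (D:ℝ)/2 = 0 by ring, Real.rpow_zero]
        linear_combination (Real.exp (-(‖β.1 - α.1‖^2 / (4 * ℏ)))
          * Real.exp (-(‖β.2 - α.2‖^2 / (4 * ℏ)))) * h6

/-- `(2πℏ)^{-D} ∫ |⟨φ_α, φ_β⟩| dβ = 2^D`. -/
theorem coherent_overlap_integral (D : ℕ) (hD : 1 ≤ D) (ℏ : ℝ) (hℏ : 0 < ℏ)
    (α : EuclideanSpace ℝ (Fin D) × EuclideanSpace ℝ (Fin D)) :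
    (2 * Real.pi * ℏ) ^ (-(D : ℝ)) *
        ∫ β : EuclideanSpace ℝ (Fin D) × EuclideanSpace ℝ (Fin D),
          ‖∫ x : EuclideanSpace ℝ (Fin D),
            (starRingEnd ℂ) (coherent D ℏ α x) * coherent D ℏ β x‖
      = 2 ^ D := by
  have hb4 : 0 < (4*ℏ)⁻¹ := by positivity
  have hgauss : ∀ c : EuclideanSpace ℝ (Fin D),
      (∫ a : EuclideanSpace ℝ (Fin D), Real.exp (-(‖a - c‖^2 / (4 * ℏ))))
        = (Real.pi * (4 * ℏ)) ^ ((D : ℝ) / 2) := by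
    intro c
    have := MeasureTheory.integral_sub_right_eq_self (μ := volume)
      (fun a : EuclideanSpace ℝ (Fin D) => Real.exp (-(4*ℏ)⁻¹ * ‖a‖^2)) c
    calc (∫ a : EuclideanSpace ℝ (Fin D), Real.exp (-(‖a - c‖^2 / (4 * ℏ))))
        = ∫ a : EuclideanSpace ℝ (Fin D), Real.exp (-(4*ℏ)⁻¹ * ‖a - c‖^2) := by
          congr 1 with a
          congr 1
          field_simp
      _ = ∫ a : EuclideanSpace ℝ (Fin D), Real.exp (-(4*ℏ)⁻¹ * ‖a‖^2) := this
      _ = (Real.pi / (4*ℏ)⁻¹) ^ ((Module.finrank ℝ (EuclideanSpace ℝ (Fin D)) : ℝ) / 2) :=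
          GaussianFourier.integral_rexp_neg_mul_sq_norm hb4
      _ = (Real.pi * (4 * ℏ)) ^ ((D : ℝ) / 2) := by
          rw [finrank_euclideanSpace_fin]
          congr 1
          field_simp
  have houter : (∫ β : EuclideanSpace ℝ (Fin D) × EuclideanSpace ℝ (Fin D),
      ‖∫ x : EuclideanSpace ℝ (Fin D),
        (starRingEnd ℂ) (coherent D ℏ α x) * coherent D ℏ β x‖)
      = (Real.pi * (4 * ℏ)) ^ (D : ℝ) := by
    calc (∫ β : EuclideanSpace ℝ (Fin D) × EuclideanSpace ℝ (Fin D),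
        ‖∫ x : EuclideanSpace ℝ (Fin D),
          (starRingEnd ℂ) (coherent D ℏ α x) * coherent D ℏ β x‖)
        = ∫ β : EuclideanSpace ℝ (Fin D) × EuclideanSpace ℝ (Fin D),
            Real.exp (-(‖β.1 - α.1‖^2 / (4 * ℏ))) * Real.exp (-(‖β.2 - α.2‖^2 / (4 * ℏ))) := by
          apply MeasureTheory.integral_congr_ae
          filter_upwards with β
          exact abs_inner_integral D ℏ hℏ α β
      _ = (∫ a : EuclideanSpace ℝ (Fin D), Real.exp (-(‖a - α.1‖^2 / (4 * ℏ)))) *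
          (∫ a : EuclideanSpace ℝ (Fin D), Real.exp (-(‖a - α.2‖^2 / (4 * ℏ)))) := by
          rw [MeasureTheory.Measure.volume_eq_prod]
          exact MeasureTheory.integral_prod_mul
            (fun a : EuclideanSpace ℝ (Fin D) => Real.exp (-(‖a - α.1‖^2 / (4 * ℏ))))
            (fun a : EuclideanSpace ℝ (Fin D) => Real.exp (-(‖a - α.2‖^2 / (4 * ℏ))))
      _ = (Real.pi * (4 * ℏ)) ^ ((D : ℝ) / 2) * (Real.pi * (4 * ℏ)) ^ ((D : ℝ) / 2) := by
          rw [hgauss, hgauss]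
      _ = (Real.pi * (4 * ℏ)) ^ (D : ℝ) := by
          rw [← Real.rpow_add (by positivity)]
          norm_num
  rw [houter]
  have h4 : Real.pi * (4 * ℏ) = 2 * (2 * Real.pi * ℏ) := by ring
  have h5 : (Real.pi * (4 * ℏ)) ^ (D : ℝ)
      = 2 ^ (D : ℝ) * (2 * Real.pi * ℏ) ^ (D : ℝ) := by
    rw [h4, Real.mul_rpow (by norm_num) (by positivity)]
  have hne : (2 * Real.pi * ℏ) ^ (D : ℝ) ≠ 0 := by positivity
  rw [h5, Real.rpow_neg (by positivity), Real.rpow_natCast 2 D]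
  field_simp
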